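/- Let G be a finite simple graph without isolated vertices, let n ≥ 2 be an integer, and let v be a new vertex. Let G̃ be the graph obtained by taking, for each edge e = xy of G, a copy of the gadget H_n in which the vertices x, y, v of H_n are identified with the endpoints x, y of e and with v respectively, all gadget copies being otherwise pairwise disjoint. Let η_1 be the coloring of G̃ with η_1(v) = 3, η_1(w) = 1 for every vertex w of G, and coloring the remaining vertices of each gadget copy according to η. Then η_1 is a proper 3-coloring of G̃, and for every vertex cover B of G, η_1 is the unique proper 3-coloring of G̃ that agrees with η_1 on B ∪ {v}. -/
import Mathlib


/-- The inner (non-boundary) vertices of the gadget graph `H_n`, i.e. the vertices of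
`H_n` other than `x`, `y`, `v`: the vertices `u_{1,i}` (`a i`) and `u_{2,i}` (`b i`)
for `1 ≤ i ≤ n`. -/
inductive HInner (n : ℕ) : Type
  | a : Fin n → HInner n
  | b : Fin n → HInner n

/-- The vertices of the graph `G̃`: the vertices of `G` together with the new vertex
`v` (`Sum.inl (Sum.inr ())`), and, for each edge `e` of `G`, a disjoint copy of the
inner vertices of the gadget `H_n`. -/
abbrev NVert {V : Type*} (G : SimpleGraph V) (n : ℕ) : Type _ :=
  (V ⊕ Unit) ⊕ (G.edgeSet × HInner n)

/-- The edge relation of `G̃`: in the gadget copy attached to an edge `e = xy` of `G`,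
both endpoints `x`, `y` are joined to all the vertices `u_{1,i}`, `u_{2,i}`, the new
vertex `v` is joined to all the `u_{1,i}`, and `u_{1,i}` is joined to `u_{2,i}`,
exactly as in `H_n`. -/
def NRel {V : Type*} (G : SimpleGraph V) (n : ℕ) :
    NVert G n → NVert G n → Prop
  | Sum.inl (Sum.inl w), Sum.inr (e, _) => w ∈ (e : Sym2 V)
  | Sum.inl (Sum.inr _), Sum.inr (_, .a _) => True
  | Sum.inr (e, .a i), Sum.inr (e', .b j) => e = e' ∧ i = j
  | _, _ => False

/-- The graph `G̃` obtained by attaching, for every edge `e = xy` of `G`, a copy of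
the gadget `H_n` along the endpoints `x`, `y` of `e` and the new vertex `v`. -/
def Ngraph {V : Type*} (G : SimpleGraph V) (n : ℕ) : SimpleGraph (NVert G n) :=
  SimpleGraph.fromRel (NRel G n)

/-- The coloring `η₁` of `G̃` (colors `1, 2, 3` are modelled as `0, 1, 2 : Fin 3`):
`η₁(v) = 3`, `η₁(w) = 1` for every vertex `w` of `G`, and each gadget copy is colored
according to `η`, i.e. `η(u_{1,i}) = 2` and `η(u_{2,i}) = 3`. -/
def ηN {V : Type*} (G : SimpleGraph V) (n : ℕ) : NVert G n → Fin 3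
  | Sum.inl (Sum.inl _) => 0
  | Sum.inl (Sum.inr _) => 2
  | Sum.inr (_, .a _) => 1
  | Sum.inr (_, .b _) => 2

/-- Let `G` be a finite graph without isolated vertices, `n ≥ 2`, and let `G̃` be
obtained by attaching a copy of the gadget `H_n` to every edge of `G`.  Then `η₁` is a
proper 3-coloring of `G̃`, and for every vertex cover `B` of `G`, `η₁` is the unique
proper 3-coloring of `G̃` agreeing with `η₁` on `B ∪ {v}`. -/
theorem stmt18 {V : Type*} [Fintype V] (G : SimpleGraph V)
    (n : ℕ) (hn : 2 ≤ n)
    (hnoiso : ∀ a : V, ∃ b, G.Adj a b) :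
    (∀ p q, (Ngraph G n).Adj p q → ηN G n p ≠ ηN G n q) ∧
    (∀ B : Set V, (∀ a b : V, G.Adj a b → a ∈ B ∨ b ∈ B) →
      ∀ σ : NVert G n → Fin 3,
        (∀ p q, (Ngraph G n).Adj p q → σ p ≠ σ q) →
        (∀ w ∈ B, σ (Sum.inl (Sum.inl w)) = ηN G n (Sum.inl (Sum.inl w))) →
        σ (Sum.inl (Sum.inr ())) = ηN G n (Sum.inl (Sum.inr ())) →
        σ = ηN G n) := by
  constructor
  · have key : ∀ p q : NVert G n, NRel G n p q → ηN G n p ≠ ηN G n q := by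
      rintro ((w|u)|⟨e,(i|i)⟩) ((w'|u')|⟨e',(j|j)⟩) h <;>
        first
        | exact h.elim
        | simp [ηN]
    intro p q hpq
    rw [Ngraph, SimpleGraph.fromRel_adj] at hpq
    obtain ⟨hne, h | h⟩ := hpq
    · exact key p q h
    · exact (key q p h).symm
  · intro B hB σ hσ hBσ hv
    have i0 : Fin n := ⟨0, by omega⟩
    have hv2 : σ (Sum.inl (Sum.inr ())) = 2 := hv
    have adj_wu : ∀ (e : G.edgeSet) (w : V) (u : HInner n), w ∈ (e : Sym2 V) →
        (Ngraph G n).Adj (Sum.inl (Sum.inl w)) (Sum.inr (e, u)) := by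
      intro e w u hw
      rw [Ngraph, SimpleGraph.fromRel_adj]
      refine ⟨by simp, Or.inl ?_⟩
      cases u <;> exact hw
    have adj_va : ∀ (e : G.edgeSet) (i : Fin n),
        (Ngraph G n).Adj (Sum.inl (Sum.inr ())) (Sum.inr (e, .a i)) := by
      intro e i
      rw [Ngraph, SimpleGraph.fromRel_adj]
      exact ⟨by simp, Or.inl trivial⟩
    have adj_ab : ∀ (e : G.edgeSet) (i : Fin n),
        (Ngraph G n).Adj (Sum.inr (e, .a i)) (Sum.inr (e, .b i)) := by
      intro e i
      rw [Ngraph, SimpleGraph.fromRel_adj]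
      exact ⟨by simp, Or.inl ⟨rfl, rfl⟩⟩
    have fin3 : ∀ c : Fin 3, c ≠ 0 → c ≠ 2 → c = 1 := by decide
    have fin3' : ∀ c : Fin 3, c ≠ 1 → c ≠ 2 → c = 0 := by decide
    have fin3'' : ∀ c : Fin 3, c ≠ 0 → c ≠ 1 → c = 2 := by decide
    have core : ∀ (e : G.edgeSet) (x y : V), (e : Sym2 V) = s(x, y) →
        σ (Sum.inl (Sum.inl x)) = 0 →
        (∀ i, σ (Sum.inr (e, .a i)) = 1) ∧ (∀ i, σ (Sum.inr (e, .b i)) = 2) ∧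
          σ (Sum.inl (Sum.inl y)) = 0 := by
      intro e x y he hx
      have hxe : x ∈ (e : Sym2 V) := by rw [he]; simp
      have hye : y ∈ (e : Sym2 V) := by rw [he]; simp
      have ha : ∀ i, σ (Sum.inr (e, .a i)) = 1 := by
        intro i
        refine fin3 _ (fun h => hσ _ _ (adj_wu e x (.a i) hxe) (hx.trans h.symm)) ?_
        exact fun h => hσ _ _ (adj_va e i) (hv2.trans h.symm)
      have hb : ∀ i, σ (Sum.inr (e, .b i)) = 2 := by
        intro i
        refine fin3'' _ (fun h => hσ _ _ (adj_wu e x (.b i) hxe) (hx.trans h.symm)) ?_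
        exact fun h => hσ _ _ (adj_ab e i) ((ha i).trans h.symm)
      refine ⟨ha, hb, fin3' _ ?_ ?_⟩
      · exact fun h => hσ _ _ (adj_wu e y (.a i0) hye) (h.trans (ha i0).symm)
      · exact fun h => hσ _ _ (adj_wu e y (.b i0) hye) (h.trans (hb i0).symm)
    have hverts : ∀ w : V, σ (Sum.inl (Sum.inl w)) = 0 := by
      intro w
      obtain ⟨b, hadj⟩ := hnoiso w
      have he : s(w, b) ∈ G.edgeSet := hadj
      rcases hB w b hadj with hw | hb
      · exact hBσ w hw
      · have hb0 : σ (Sum.inl (Sum.inl b)) = 0 := hBσ b hb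
        exact (core ⟨s(w, b), he⟩ b w (Sym2.eq_swap) hb0).2.2
    funext p
    rcases p with ((w | u) | ⟨e, u⟩)
    · exact hverts w
    · cases u; exact hv
    · obtain ⟨es, he⟩ := e
      induction es using Sym2.inductionOn with
      | hf x y =>
        have hc := core ⟨s(x, y), he⟩ x y rfl (hverts x)
        cases u with
        | a i => exact hc.1 i
        | b i => exact hc.2.1 i
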